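/- For all m, n ≥ 1, if x ∈ Lie(m) and y ∈ Lie(n), then x⋆y − y⋆x ∈ Lie(m+n); that is, the direct sum Lie = ⊕_{n≥1} Lie(n) is closed under the convolution bracket [x,y]_⋆ = x⋆y − y⋆x. -/

import Mathlib

/-- The free module on words of positive integers, with coefficients in `R`.
`ℚ[S_n]` is identified with the span of the permutation words of {1,…,n}. -/
abbrev FW (R : Type) [CommRing R] := (List ℕ) →₀ R

variable {R : Type} [CommRing R]

/-- Concatenation product, extended bilinearly. -/
noncomputable def catW (x y : FW R) : FW R :=
  x.sum fun u a => y.sum fun v b => Finsupp.single (u ++ v) (a * b)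

/-- The bracket [x,y] = x·y − y·x of the concatenation product. -/
noncomputable def brakW (x y : FW R) : FW R := catW x y - catW y x

/-- (Incomplete) binary trees; `nil` is the empty tree. The complete binary tree with
`t.nodes + 1` leaves whose internal nodes form `t` is implicit in the definitions below. -/
inductive BT
  | nil : BT
  | nd : BT → BT → BT
deriving DecidableEq

/-- Number of nodes of a binary tree. -/
def BT.nodes : BT → ℕ
  | .nil => 0
  | .nd l r => l.nodes + r.nodes + 1

/-- The evaluation T(σ) of the complete binary tree `T` whose internal nodes form `t`, with
leaves labelled left to right by the word `w`: each leaf gets the one-letter word of its label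
and each internal node the bracket of concatenation. -/
noncomputable def evalBT : BT → List ℕ → FW R
  | .nil, w => Finsupp.single w 1
  | .nd l r, w => brakW (evalBT l (w.take (l.nodes + 1))) (evalBT r (w.drop (l.nodes + 1)))

/-- The standardization of a word with distinct letters: each letter is replaced by its rank. -/
def stdW (w : List ℕ) : List ℕ := w.map fun x => (w.filter (· ≤ x)).length

/-- The set of permutation words of {1, …, n}. -/
def permWords (n : ℕ) : Finset (List ℕ) := (List.range' 1 n).permutations.toFinset

/-- Convolution α⋆β of two permutation words: the sum of all permutation words γ of size
|α|+|β| with std(γ(1)⋯γ(m)) = α and std(γ(m+1)⋯γ(m+n)) = β. -/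
noncomputable def convW (u v : List ℕ) : FW R :=
  ∑ γ ∈ (permWords (u.length + v.length)).filter
      (fun γ => stdW (γ.take u.length) = u ∧ stdW (γ.drop u.length) = v),
    Finsupp.single γ 1

/-- The convolution product, extended bilinearly. -/
noncomputable def starW (x y : FW R) : FW R :=
  x.sum fun u a => y.sum fun v b => (a * b) • convW u v

/-- Whether the word `w` is an admissible labelling of (the completion of) `t`: at each internal
node, the smallest label lies in the left subtree and the largest in the right subtree. -/
def admB : BT → List ℕ → Bool
  | .nil, _ => true
  | .nd l r, w =>
    admB l (w.take (l.nodes + 1)) && admB r (w.drop (l.nodes + 1))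
      && decide ((w.take (l.nodes + 1)).minimum = w.minimum)
      && decide ((w.drop (l.nodes + 1)).maximum = w.maximum)

/-- c_t: the sum of the evaluations T(σ) over all admissible labellings σ of the complete
binary tree whose internal nodes form `t`. -/
noncomputable def cElt (t : BT) : FW R :=
  ∑ w ∈ (permWords (t.nodes + 1)).filter (fun w => admB t w = true), evalBT t w

/-- Lie(n): the linear span of the evaluations T(σ) over all complete binary trees with n
leaves and all permutations σ ∈ S_n. -/
noncomputable def LieN (n : ℕ) : Submodule ℚ (FW ℚ) :=
  Submodule.span ℚ {x | ∃ t : BT, ∃ w ∈ permWords n, t.nodes + 1 = n ∧ x = evalBT t w}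

-- generic bilinear map from a kernel
noncomputable def bilin (g : List ℕ → List ℕ → FW R) : FW R →ₗ[R] FW R →ₗ[R] FW R :=
  Finsupp.lsum R fun u => LinearMap.toSpanSingleton R (FW R →ₗ[R] FW R)
    (Finsupp.lsum R fun v => LinearMap.toSpanSingleton R (FW R) (g u v))

lemma bilin_apply (g : List ℕ → List ℕ → FW R) (x y : FW R) :
    bilin g x y = x.sum fun u a => y.sum fun v b => (a * b) • g u v := by
  rw [bilin, Finsupp.lsum_apply, LinearMap.finsupp_sum_apply]
  refine Finsupp.sum_congr fun u hu => ?_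
  rw [LinearMap.toSpanSingleton_apply, LinearMap.smul_apply, Finsupp.lsum_apply,
    Finsupp.smul_sum]
  refine Finsupp.sum_congr fun v hv => ?_
  rw [LinearMap.toSpanSingleton_apply, smul_smul]

lemma catW_eq_bilin (x y : FW R) :
    catW x y = bilin (fun u v => Finsupp.single (u ++ v) 1) x y := by
  rw [bilin_apply, catW]
  refine Finsupp.sum_congr fun u hu => Finsupp.sum_congr fun v hv => ?_
  rw [Finsupp.smul_single, smul_eq_mul, mul_one]

lemma catW_single_single (u v : List ℕ) (a b : R) :
    catW (Finsupp.single u a) (Finsupp.single v b) = Finsupp.single (u ++ v) (a * b) := by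
  rw [catW_eq_bilin, bilin_apply]
  rw [Finsupp.sum_single_index (by simp [Finsupp.sum_single_index]),
    Finsupp.sum_single_index (by simp)]
  simp

lemma catW_add_left (x x' y : FW R) : catW (x + x') y = catW x y + catW x' y := by
  rw [catW_eq_bilin, catW_eq_bilin, catW_eq_bilin, map_add, LinearMap.add_apply]

lemma catW_add_right (x y y' : FW R) : catW x (y + y') = catW x y + catW x y' := by
  rw [catW_eq_bilin, catW_eq_bilin, catW_eq_bilin, map_add]

lemma mapDomain_catW (f : List ℕ → List ℕ) (hf : ∀ u v, f (u ++ v) = f u ++ f v)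
    (x y : FW R) :
    catW (Finsupp.mapDomain f x) (Finsupp.mapDomain f y) = Finsupp.mapDomain f (catW x y) := by
  have hsingle : ∀ (u : List ℕ) (a : R) (y : FW R),
      catW (Finsupp.mapDomain f (Finsupp.single u a)) (Finsupp.mapDomain f y)
        = Finsupp.mapDomain f (catW (Finsupp.single u a) y) := by
    intro u a y
    induction y using Finsupp.induction₂ with
    | zero => simp [catW_eq_bilin]
    | add_single v b y _ _ ihy =>
      rw [Finsupp.mapDomain_add, catW_add_right, catW_add_right, Finsupp.mapDomain_add, ihy,
        Finsupp.mapDomain_single, Finsupp.mapDomain_single, catW_single_single,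
        catW_single_single, Finsupp.mapDomain_single, hf]
  induction x using Finsupp.induction₂ with
  | zero => simp [catW_eq_bilin]
  | add_single u a x _ _ ih =>
    rw [Finsupp.mapDomain_add, catW_add_left, catW_add_left, Finsupp.mapDomain_add, ih, hsingle]

lemma mapDomain_brakW (f : List ℕ → List ℕ) (hf : ∀ u v, f (u ++ v) = f u ++ f v)
    (x y : FW R) :
    brakW (Finsupp.mapDomain f x) (Finsupp.mapDomain f y) = Finsupp.mapDomain f (brakW x y) := by
  rw [brakW, brakW, mapDomain_catW f hf, mapDomain_catW f hf]
  have := (Finsupp.mapDomain.addMonoidHom (M := R) f).map_sub (catW x y) (catW y x)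
  simp only [Finsupp.mapDomain.addMonoidHom_apply] at this
  exact this.symm

lemma evalBT_map (g : ℕ → ℕ) (t : BT) (w : List ℕ) :
    evalBT (R := R) t (w.map g) = Finsupp.mapDomain (List.map g) (evalBT t w) := by
  induction t generalizing w with
  | nil => rw [evalBT, evalBT, Finsupp.mapDomain_single]
  | nd l r ihl ihr =>
    rw [evalBT, evalBT, ← List.map_take, ← List.map_drop, ihl, ihr,
      mapDomain_brakW _ (fun u v => List.map_append)]

lemma support_evalBT (t : BT) (w : List ℕ) :
    ∀ u ∈ (evalBT (R := R) t w).support, u.Perm w := by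
  induction t generalizing w with
  | nil =>
    intro u hu
    rw [evalBT] at hu
    have := Finsupp.support_single_subset hu
    simp only [Finset.mem_singleton] at this
    rw [this]
  | nd l r ihl ihr =>
    intro u hu
    rw [evalBT, brakW] at hu
    have hcat : ∀ (x y : FW R) (w1 w2 : List ℕ), (∀ p ∈ x.support, p.Perm w1) →
        (∀ q ∈ y.support, q.Perm w2) → (w1 ++ w2).Perm w →
        ∀ z ∈ (catW x y).support, z.Perm w := by
      intro x y w1 w2 hx hy hw z hz
      rw [catW] at hz
      have h1 := Finsupp.support_sum hz
      rw [Finset.mem_biUnion] at h1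
      obtain ⟨p, hp, h2⟩ := h1
      have h3 := Finsupp.support_sum h2
      rw [Finset.mem_biUnion] at h3
      obtain ⟨q, hq, h4⟩ := h3
      have h5 := Finsupp.support_single_subset h4
      simp only [Finset.mem_singleton] at h5
      subst h5
      exact ((hx p hp).append (hy q hq)).trans hw
    have := Finsupp.support_sub hu
    rw [Finset.mem_union] at this
    rcases this with h | h
    · refine hcat _ _ _ _ (ihl _) (ihr _) ?_ u h
      rw [List.take_append_drop]
    · refine hcat _ _ _ _ (ihr _) (ihl _) ?_ u h
      exact (List.perm_append_comm).trans (by rw [List.take_append_drop])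

lemma starW_eq_bilin (x y : FW R) : starW x y = bilin convW x y := by
  rw [bilin_apply, starW]

lemma starW_add_left (x x' y : FW R) : starW (x + x') y = starW x y + starW x' y := by
  simp [starW_eq_bilin]

lemma starW_add_right (x y y' : FW R) : starW x (y + y') = starW x y + starW x y' := by
  simp [starW_eq_bilin]

lemma starW_smul_left (c : R) (x y : FW R) : starW (c • x) y = c • starW x y := by
  simp [starW_eq_bilin]

lemma starW_smul_right (c : R) (x y : FW R) : starW x (c • y) = c • starW x y := by
  simp [starW_eq_bilin]

lemma starW_zero_left (y : FW R) : starW 0 y = 0 := by simp [starW_eq_bilin]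

lemma starW_zero_right (x : FW R) : starW x 0 = 0 := by simp [starW_eq_bilin]

lemma mem_permWords {w : List ℕ} {n : ℕ} : w ∈ permWords n ↔ w.Perm (List.range' 1 n) := by
  rw [permWords, List.mem_toFinset, List.mem_permutations]

lemma mem_range'_one {x n : ℕ} : x ∈ List.range' 1 n ↔ 1 ≤ x ∧ x ≤ n := by
  rw [List.mem_range'_1]
  omega

lemma permWords_length {w : List ℕ} {n : ℕ} (hw : w ∈ permWords n) : w.length = n := by
  rw [(mem_permWords.mp hw).length_eq, List.length_range']

lemma permWords_nodup {w : List ℕ} {n : ℕ} (hw : w ∈ permWords n) : w.Nodup :=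
  (mem_permWords.mp hw).nodup_iff.mpr (List.nodup_range')

lemma permWords_mem_iff {w : List ℕ} {n : ℕ} (hw : w ∈ permWords n) {x : ℕ} :
    x ∈ w ↔ 1 ≤ x ∧ x ≤ n := by
  rw [(mem_permWords.mp hw).mem_iff, mem_range'_one]

lemma permWords_toFinset {w : List ℕ} {n : ℕ} (hw : w ∈ permWords n) :
    w.toFinset = Finset.Icc 1 n := by
  ext x
  rw [List.mem_toFinset, permWords_mem_iff hw, Finset.mem_Icc]

/-- Relabelling function: `k ↦` the `k`-th smallest element of `A`. -/
noncomputable def inflFun (A : Finset ℕ) (k : ℕ) : ℕ := (A.sort (· ≤ ·)).getD (k - 1) 0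

lemma inflFun_lt {A : Finset ℕ} {j k : ℕ} (hj : 1 ≤ j) (hk : k ≤ A.card) (hjk : j < k) :
    inflFun A j < inflFun A k := by
  have hlen : (A.sort (· ≤ ·)).length = A.card := Finset.length_sort _
  have hj' : j - 1 < (A.sort (· ≤ ·)).length := by omega
  have hk' : k - 1 < (A.sort (· ≤ ·)).length := by omega
  rw [inflFun, inflFun, List.getD_eq_getElem _ _ hj', List.getD_eq_getElem _ _ hk']
  exact List.pairwise_iff_getElem.mp (Finset.sortedLT_sort A).pairwise _ _ hj' hk' (by omega)

lemma inflFun_le_iff {A : Finset ℕ} {j k : ℕ} (hj1 : 1 ≤ j) (hj2 : j ≤ A.card)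
    (hk1 : 1 ≤ k) (hk2 : k ≤ A.card) : inflFun A j ≤ inflFun A k ↔ j ≤ k := by
  constructor
  · intro h
    by_contra hc
    exact absurd (inflFun_lt hk1 hj2 (by omega)) (by omega)
  · intro h
    rcases eq_or_lt_of_le h with rfl | h
    · exact le_refl _
    · exact le_of_lt (inflFun_lt hj1 hk2 h)

lemma inflFun_mem {A : Finset ℕ} {k : ℕ} (hk1 : 1 ≤ k) (hk2 : k ≤ A.card) :
    inflFun A k ∈ A := by
  have hk' : k - 1 < (A.sort (· ≤ ·)).length := by rw [Finset.length_sort]; omega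
  rw [inflFun, List.getD_eq_getElem _ _ hk']
  rw [← Finset.mem_sort (α := ℕ) (· ≤ ·)]
  exact List.getElem_mem _

lemma exists_inflFun_eq {A : Finset ℕ} {a : ℕ} (ha : a ∈ A) :
    ∃ k, 1 ≤ k ∧ k ≤ A.card ∧ inflFun A k = a := by
  rw [← Finset.mem_sort (α := ℕ) (· ≤ ·)] at ha
  obtain ⟨i, hi, hia⟩ := List.mem_iff_getElem.mp ha
  refine ⟨i + 1, by omega, by rw [Finset.length_sort] at hi; omega, ?_⟩
  rw [inflFun, Nat.add_sub_cancel, List.getD_eq_getElem _ _ hi, hia]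

/-- Relabel a standard word into alphabet `A`. -/
noncomputable def inflW (A : Finset ℕ) (w : List ℕ) : List ℕ := w.map (inflFun A)

lemma length_inflW (A : Finset ℕ) (w : List ℕ) : (inflW A w).length = w.length :=
  List.length_map _

lemma filter_le_range' {m k : ℕ} (hk : k ≤ m) :
    (List.range' 1 m).filter (fun x => x ≤ k) = List.range' 1 k := by
  have hsplit : List.range' 1 k ++ List.range' (1 + k) (m - k) = List.range' 1 m := by
    have := List.range'_append (s := 1) (m := k) (n := m - k) (step := 1)
    rw [one_mul] at this
    rw [this]
    congr 1
    omega
  rw [← hsplit, List.filter_append]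
  rw [List.filter_eq_self.mpr, List.filter_eq_nil_iff.mpr, List.append_nil]
  · intro x hx
    simp only [List.mem_range'] at hx
    simp only [decide_eq_true_eq]
    omega
  · intro x hx
    rw [mem_range'_one] at hx
    simp only [decide_eq_true_eq]
    omega

lemma count_le_permWords {u : List ℕ} {m k : ℕ} (hu : u ∈ permWords m) (hk : k ≤ m) :
    ((u.filter (fun x => x ≤ k))).length = k := by
  rw [((mem_permWords.mp hu).filter _).length_eq, filter_le_range' hk, List.length_range']

lemma nodup_inflW {A : Finset ℕ} {u : List ℕ} {m : ℕ} (hA : A.card = m)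
    (hu : u ∈ permWords m) : (inflW A u).Nodup := by
  refine (permWords_nodup hu).map_on ?_
  intro j hj k hk hjk
  rw [permWords_mem_iff hu] at hj hk
  by_contra hc
  rcases Nat.lt_or_ge j k with h | h
  · exact absurd (inflFun_lt (A := A) hj.1 (by omega) h) (by omega)
  · have h' : k < j := by omega
    exact absurd (inflFun_lt (A := A) hk.1 (by omega) h') (by omega)

lemma toFinset_inflW {A : Finset ℕ} {u : List ℕ} {m : ℕ} (hA : A.card = m)
    (hu : u ∈ permWords m) : (inflW A u).toFinset = A := by
  ext a
  rw [inflW, List.mem_toFinset, List.mem_map]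
  constructor
  · rintro ⟨k, hk, rfl⟩
    rw [permWords_mem_iff hu] at hk
    exact inflFun_mem hk.1 (by omega)
  · intro ha
    obtain ⟨k, hk1, hk2, hka⟩ := exists_inflFun_eq ha
    exact ⟨k, (permWords_mem_iff hu).mpr ⟨hk1, by omega⟩, hka⟩

lemma stdW_inflW {A : Finset ℕ} {u : List ℕ} {m : ℕ} (hA : A.card = m)
    (hu : u ∈ permWords m) : stdW (inflW A u) = u := by
  rw [stdW, inflW, List.map_map]
  conv_rhs => rw [← List.map_id u]
  refine List.map_congr_left ?_
  intro k hk
  simp only [Function.comp_apply, id_eq]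
  have hkm := (permWords_mem_iff hu).mp hk
  rw [List.filter_map, List.length_map]
  simp only [Function.comp_def]
  have hfc : (u.filter (fun j => decide (inflFun A j ≤ inflFun A k))) =
      u.filter (fun j => j ≤ k) := by
    refine List.filter_congr ?_
    intro j hj
    have hjm := (permWords_mem_iff hu).mp hj
    simp only [decide_eq_decide]
    exact inflFun_le_iff hjm.1 (by omega) hkm.1 (by omega)
  rw [hfc]
  exact count_le_permWords hu hkm.2

lemma sorted_filter_le {l : List ℕ} (hl : l.Pairwise (· < ·)) {i : ℕ} (hi : i < l.length) :
    (l.filter (fun x => x ≤ l[i])).length = i + 1 := by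
  have hmono := List.pairwise_iff_getElem.mp hl
  generalize hgen : l[i] = c
  conv_lhs => rw [← List.take_append_drop (i + 1) l, List.filter_append]
  rw [List.filter_eq_self.mpr, List.filter_eq_nil_iff.mpr, List.append_nil,
    List.length_take]
  · omega
  · intro x hx
    obtain ⟨j, hj, hjx⟩ := List.mem_iff_getElem.mp hx
    have hj' : i + 1 + j < l.length := by
      have : (l.drop (i + 1)).length = l.length - (i + 1) := List.length_drop
      omega
    rw [List.getElem_drop] at hjx
    simp only [decide_eq_true_eq]
    intro hc
    subst hjx
    subst hgen
    exact absurd (hmono i (i + 1 + j) hi hj' (by omega)) (by omega)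
  · intro x hx
    obtain ⟨j, hj, hjx⟩ := List.mem_iff_getElem.mp hx
    rw [List.length_take] at hj
    have hj'' : j < l.length := by omega
    rw [List.getElem_take] at hjx
    simp only [decide_eq_true_eq]
    subst hjx
    subst hgen
    rcases Nat.lt_or_ge j i with h | h
    · exact le_of_lt (hmono j i hj'' hi h)
    · have : j = i := by omega
      subst this
      exact le_refl _

lemma inflW_stdW {w : List ℕ} (hw : w.Nodup) : inflW w.toFinset (stdW w) = w := by
  rw [stdW, inflW, List.map_map]
  conv_rhs => rw [← List.map_id w]
  refine List.map_congr_left ?_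
  intro x hx
  simp only [Function.comp_apply, id_eq]
  set A := w.toFinset with hA
  set l := A.sort (· ≤ ·) with hl
  have hlnd : l.Nodup := Finset.sort_nodup _ _
  have hltf : l.toFinset = A := Finset.sort_toFinset _ _
  have hxl : x ∈ l := by rw [← List.mem_toFinset, hltf, hA, List.mem_toFinset]; exact hx
  obtain ⟨i, hi, hix⟩ := List.mem_iff_getElem.mp hxl
  have hcount : (w.filter (fun y => y ≤ x)).length = i + 1 := by
    have h1 : (w.filter (fun y => y ≤ x)).length = (l.filter (fun y => y ≤ x)).length := by
      have hnd1 : (w.filter (fun y => y ≤ x)).Nodup := hw.filter _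
      have hnd2 : (l.filter (fun y => y ≤ x)).Nodup := hlnd.filter _
      rw [← List.toFinset_card_of_nodup hnd1, ← List.toFinset_card_of_nodup hnd2,
        List.toFinset_filter, List.toFinset_filter, hltf, ← hA]
    rw [h1, ← hix]
    exact sorted_filter_le (Finset.sortedLT_sort A).pairwise hi
  rw [hcount, inflFun, Nat.add_sub_cancel, ← hl, List.getD_eq_getElem _ _ hi, hix]

lemma toFinset_drop_eq {γ : List ℕ} (hγ : γ.Nodup) (m : ℕ) :
    (γ.drop m).toFinset = γ.toFinset \ (γ.take m).toFinset := by
  have hsplit : γ.take m ++ γ.drop m = γ := List.take_append_drop m γ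
  have hdisj : (γ.take m).Disjoint (γ.drop m) := by
    rw [← hsplit] at hγ
    exact (List.nodup_append'.mp hγ).2.2
  ext x
  simp only [List.mem_toFinset, Finset.mem_sdiff, List.mem_toFinset]
  constructor
  · intro h
    refine ⟨by rw [← hsplit]; exact List.mem_append_right _ h, fun hc => hdisj hc h⟩
  · rintro ⟨h1, h2⟩
    rw [← hsplit] at h1
    rcases List.mem_append.mp h1 with h | h
    · exact absurd h h2
    · exact h

lemma card_Icc_one (n : ℕ) : (Finset.Icc 1 n).card = n := by
  rw [Nat.card_Icc]; omega

lemma gamma_mem {m n : ℕ} {A : Finset ℕ} {u v : List ℕ}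
    (hA : A ∈ Finset.powersetCard m (Finset.Icc 1 (m + n)))
    (hu : u ∈ permWords m) (hv : v ∈ permWords n) :
    inflW A u ++ inflW (Finset.Icc 1 (m + n) \ A) v ∈ permWords (m + n) := by
  obtain ⟨hsub, hcard⟩ := Finset.mem_powersetCard.mp hA
  have hcardB : (Finset.Icc 1 (m + n) \ A).card = n := by
    rw [Finset.card_sdiff_of_subset hsub, card_Icc_one, hcard]
    omega
  have h1 : (inflW A u).toFinset = A := toFinset_inflW hcard hu
  have h2 : (inflW (Finset.Icc 1 (m + n) \ A) v).toFinset = Finset.Icc 1 (m + n) \ A :=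
    toFinset_inflW hcardB hv
  rw [mem_permWords]
  refine List.perm_of_nodup_nodup_toFinset_eq ?_ (List.nodup_range') ?_
  · rw [List.nodup_append']
    refine ⟨nodup_inflW hcard hu, nodup_inflW hcardB hv, ?_⟩
    intro x hx1 hx2
    rw [← List.mem_toFinset, h1] at hx1
    rw [← List.mem_toFinset, h2, Finset.mem_sdiff] at hx2
    exact hx2.2 hx1
  · rw [List.toFinset_append, h1, h2, Finset.union_sdiff_of_subset hsub]
    ext x
    rw [Finset.mem_Icc, List.mem_toFinset, mem_range'_one]

lemma take_gamma {m n : ℕ} {A B : Finset ℕ} {u v : List ℕ} (hu : u ∈ permWords m) :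
    (inflW A u ++ inflW B v).take m = inflW A u :=
  List.take_left' (by rw [length_inflW, permWords_length hu])

lemma drop_gamma {m n : ℕ} {A B : Finset ℕ} {u v : List ℕ} (hu : u ∈ permWords m) :
    (inflW A u ++ inflW B v).drop m = inflW B v :=
  List.drop_left' (by rw [length_inflW, permWords_length hu])

lemma convW_eq {m n : ℕ} {u v : List ℕ} (hu : u ∈ permWords m) (hv : v ∈ permWords n) :
    convW (R := R) u v = ∑ A ∈ Finset.powersetCard m (Finset.Icc 1 (m + n)),
      Finsupp.single (inflW A u ++ inflW (Finset.Icc 1 (m + n) \ A) v) 1 := by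
  rw [convW, permWords_length hu, permWords_length hv]
  refine Finset.sum_nbij' (fun γ => (γ.take m).toFinset)
    (fun A => inflW A u ++ inflW (Finset.Icc 1 (m + n) \ A) v) ?_ ?_ ?_ ?_ ?_
  · intro γ hγ
    rw [Finset.mem_filter] at hγ
    obtain ⟨hγp, hstd1, hstd2⟩ := hγ
    rw [Finset.mem_powersetCard]
    constructor
    · intro x hx
      rw [List.mem_toFinset] at hx
      have := List.mem_of_mem_take hx
      rw [← List.mem_toFinset, permWords_toFinset hγp] at this
      exact this
    · have hnd : (γ.take m).Nodup := (permWords_nodup hγp).sublist (List.take_sublist _ _)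
      rw [List.toFinset_card_of_nodup hnd, List.length_take, permWords_length hγp]
      omega
  · intro A hA
    rw [Finset.mem_filter]
    refine ⟨gamma_mem hA hu hv, ?_, ?_⟩
    · rw [take_gamma (n := n) hu]
      exact stdW_inflW (Finset.mem_powersetCard.mp hA).2 hu
    · rw [drop_gamma (n := n) hu]
      have hcardB : (Finset.Icc 1 (m + n) \ A).card = n := by
        obtain ⟨hsub, hcard⟩ := Finset.mem_powersetCard.mp hA
        rw [Finset.card_sdiff_of_subset hsub, card_Icc_one, hcard]
        omega
      exact stdW_inflW hcardB hv
  · intro γ hγ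
    rw [Finset.mem_filter] at hγ
    obtain ⟨hγp, hstd1, hstd2⟩ := hγ
    have hnd := permWords_nodup hγp
    have hndt : (γ.take m).Nodup := hnd.sublist (List.take_sublist _ _)
    have hndd : (γ.drop m).Nodup := hnd.sublist (List.drop_sublist _ _)
    have e1 : inflW (γ.take m).toFinset u = γ.take m := by
      rw [← hstd1]; exact inflW_stdW hndt
    have e2 : Finset.Icc 1 (m + n) \ (γ.take m).toFinset = (γ.drop m).toFinset := by
      rw [← permWords_toFinset hγp, ← toFinset_drop_eq hnd]
    have e3 : inflW (γ.drop m).toFinset v = γ.drop m := by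
      rw [← hstd2]; exact inflW_stdW hndd
    beta_reduce
    rw [e1, e2, e3, List.take_append_drop]
  · intro A hA
    beta_reduce
    rw [take_gamma (n := n) hu]
    exact toFinset_inflW (Finset.mem_powersetCard.mp hA).2 hu
  · intro γ hγ
    rw [Finset.mem_filter] at hγ
    obtain ⟨hγp, hstd1, hstd2⟩ := hγ
    have hnd := permWords_nodup hγp
    have e1 : inflW (γ.take m).toFinset u = γ.take m := by
      rw [← hstd1]; exact inflW_stdW (hnd.sublist (List.take_sublist _ _))
    have e2 : Finset.Icc 1 (m + n) \ (γ.take m).toFinset = (γ.drop m).toFinset := by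
      rw [← permWords_toFinset hγp, ← toFinset_drop_eq hnd]
    have e3 : inflW (γ.drop m).toFinset v = γ.drop m := by
      rw [← hstd2]; exact inflW_stdW (hnd.sublist (List.drop_sublist _ _))
    beta_reduce
    rw [e1, e2, e3, List.take_append_drop]

lemma mapDomain_eq_sum (f : List ℕ → List ℕ) (x : FW R) :
    Finsupp.mapDomain f x = ∑ u ∈ x.support, Finsupp.single (f u) (x u) := rfl

lemma catW_sum_sum {ι κ : Type} (s : Finset ι) (t : Finset κ) (f : ι → FW R) (g : κ → FW R) :
    catW (∑ i ∈ s, f i) (∑ j ∈ t, g j) = ∑ i ∈ s, ∑ j ∈ t, catW (f i) (g j) := by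
  rw [catW_eq_bilin, map_sum (bilin fun u v => Finsupp.single (u ++ v) 1) f s,
    LinearMap.sum_apply]
  refine Finset.sum_congr rfl fun i _ => ?_
  rw [map_sum]
  refine Finset.sum_congr rfl fun j _ => ?_
  rw [catW_eq_bilin]

lemma starW_decomp {m n : ℕ} (x y : FW R) (hx : ∀ u ∈ x.support, u ∈ permWords m)
    (hy : ∀ v ∈ y.support, v ∈ permWords n) :
    starW x y = ∑ A ∈ Finset.powersetCard m (Finset.Icc 1 (m + n)),
      catW (Finsupp.mapDomain (List.map (inflFun A)) x)
        (Finsupp.mapDomain (List.map (inflFun (Finset.Icc 1 (m + n) \ A))) y) := by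
  have lhs : starW x y = ∑ u ∈ x.support, ∑ v ∈ y.support,
      ∑ A ∈ Finset.powersetCard m (Finset.Icc 1 (m + n)),
        Finsupp.single (inflW A u ++ inflW (Finset.Icc 1 (m + n) \ A) v) (x u * y v) := by
    rw [starW]
    refine Finset.sum_congr rfl fun u hu => Finset.sum_congr rfl fun v hv => ?_
    beta_reduce
    rw [convW_eq (hx u hu) (hy v hv), Finset.smul_sum]
    refine Finset.sum_congr rfl fun A _ => ?_
    rw [Finsupp.smul_single, smul_eq_mul, mul_one]
  rw [lhs]
  rw [Finset.sum_congr rfl fun u (_ : u ∈ x.support) => Finset.sum_comm (s := y.support)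
    (t := Finset.powersetCard m (Finset.Icc 1 (m + n)))]
  rw [Finset.sum_comm]
  refine Finset.sum_congr rfl fun A _ => ?_
  rw [mapDomain_eq_sum, mapDomain_eq_sum, catW_sum_sum]
  refine Finset.sum_congr rfl fun u _ => Finset.sum_congr rfl fun v _ => ?_
  rw [catW_single_single]
  rfl

lemma support_evalBT_perm {t : BT} {m : ℕ} {α : List ℕ} (hα : α ∈ permWords m) :
    ∀ u ∈ (evalBT (R := R) t α).support, u ∈ permWords m := by
  intro u hu
  exact mem_permWords.mpr ((support_evalBT t α u hu).trans (mem_permWords.mp hα))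

lemma key_bracket (t s : BT) (α β : List ℕ)
    (hα : α ∈ permWords (t.nodes + 1)) (hβ : β ∈ permWords (s.nodes + 1)) :
    starW (evalBT (R := R) t α) (evalBT s β) - starW (evalBT s β) (evalBT t α)
      = ∑ A ∈ Finset.powersetCard (t.nodes + 1)
          (Finset.Icc 1 (t.nodes + 1 + (s.nodes + 1))),
          evalBT (BT.nd t s)
            (inflW A α ++ inflW (Finset.Icc 1 (t.nodes + 1 + (s.nodes + 1)) \ A) β) := by
  set m := t.nodes + 1 with hm
  set n := s.nodes + 1 with hn
  have hsx := support_evalBT_perm (t := t) (R := R) hα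
  have hsy := support_evalBT_perm (t := s) (R := R) hβ
  rw [starW_decomp _ _ hsx hsy, starW_decomp _ _ hsy hsx, Nat.add_comm n m]
  have hreindex : ∑ B ∈ Finset.powersetCard n (Finset.Icc 1 (m + n)),
      catW (Finsupp.mapDomain (List.map (inflFun B)) (evalBT (R := R) s β))
        (Finsupp.mapDomain (List.map (inflFun (Finset.Icc 1 (m + n) \ B)))
          (evalBT (R := R) t α))
      = ∑ A ∈ Finset.powersetCard m (Finset.Icc 1 (m + n)),
      catW (Finsupp.mapDomain (List.map (inflFun (Finset.Icc 1 (m + n) \ A)))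
          (evalBT (R := R) s β))
        (Finsupp.mapDomain (List.map (inflFun A)) (evalBT (R := R) t α)) := by
    refine Finset.sum_nbij' (fun B => Finset.Icc 1 (m + n) \ B)
      (fun A => Finset.Icc 1 (m + n) \ A) ?_ ?_ ?_ ?_ ?_
    · intro B hB
      obtain ⟨hsub, hcard⟩ := Finset.mem_powersetCard.mp hB
      rw [Finset.mem_powersetCard]
      refine ⟨Finset.sdiff_subset, ?_⟩
      rw [Finset.card_sdiff_of_subset hsub, card_Icc_one, hcard]
      omega
    · intro A hA
      obtain ⟨hsub, hcard⟩ := Finset.mem_powersetCard.mp hA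
      rw [Finset.mem_powersetCard]
      refine ⟨Finset.sdiff_subset, ?_⟩
      rw [Finset.card_sdiff_of_subset hsub, card_Icc_one, hcard]
      omega
    · intro B hB
      exact Finset.sdiff_sdiff_eq_self (Finset.mem_powersetCard.mp hB).1
    · intro A hA
      exact Finset.sdiff_sdiff_eq_self (Finset.mem_powersetCard.mp hA).1
    · intro B hB
      beta_reduce
      rw [Finset.sdiff_sdiff_eq_self (Finset.mem_powersetCard.mp hB).1]
  rw [hreindex, ← Finset.sum_sub_distrib]
  refine Finset.sum_congr rfl fun A _ => ?_
  have eX : Finsupp.mapDomain (List.map (inflFun A)) (evalBT (R := R) t α)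
      = evalBT t (inflW A α) := (evalBT_map (inflFun A) t α).symm
  have eY : Finsupp.mapDomain (List.map (inflFun (Finset.Icc 1 (m + n) \ A)))
      (evalBT (R := R) s β)
      = evalBT s (inflW (Finset.Icc 1 (m + n) \ A) β) :=
    (evalBT_map (inflFun (Finset.Icc 1 (m + n) \ A)) s β).symm
  rw [eX, eY]
  have : evalBT (R := R) (BT.nd t s)
      (inflW A α ++ inflW (Finset.Icc 1 (m + n) \ A) β)
      = brakW (evalBT t (inflW A α)) (evalBT s (inflW (Finset.Icc 1 (m + n) \ A) β)) := by
    rw [evalBT, ← hm, take_gamma (n := n) hα, drop_gamma (n := n) hα]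
  rw [this, brakW]

lemma key_mem (t s : BT) (α β : List ℕ)
    (hα : α ∈ permWords (t.nodes + 1)) (hβ : β ∈ permWords (s.nodes + 1)) :
    starW (evalBT (R := ℚ) t α) (evalBT s β) - starW (evalBT s β) (evalBT t α)
      ∈ LieN (t.nodes + 1 + (s.nodes + 1)) := by
  rw [key_bracket t s α β hα hβ]
  refine Submodule.sum_mem _ fun A hA => ?_
  refine Submodule.subset_span ?_
  refine ⟨BT.nd t s, _, gamma_mem hA hα hβ, ?_, rfl⟩
  show t.nodes + s.nodes + 1 + 1 = _
  omega

theorem stmt6 : ∀ m n : ℕ, 1 ≤ m → 1 ≤ n → ∀ x y : FW ℚ,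
    x ∈ LieN m → y ∈ LieN n → starW x y - starW y x ∈ LieN (m + n) := by
  intro m n _ _ x y hx hy
  have hgen : ∀ x', (∃ t : BT, ∃ w ∈ permWords m, t.nodes + 1 = m ∧ x' = evalBT t w) →
      starW x' y - starW y x' ∈ LieN (m + n) := by
    rintro x' ⟨t, α, hα, htm, rfl⟩
    refine Submodule.span_induction
      (p := fun z _ => starW (evalBT t α) z - starW z (evalBT t α) ∈ LieN (m + n))
      ?_ ?_ ?_ ?_ hy
    · rintro z ⟨s, β, hβ, hsn, rfl⟩
      subst htm
      subst hsn
      exact key_mem t s α β hα hβ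
    · beta_reduce
      rw [starW_zero_left, starW_zero_right, sub_zero]
      exact Submodule.zero_mem _
    · intro a b _ _ ha hb
      beta_reduce
      rw [starW_add_right, starW_add_left, add_sub_add_comm]
      exact add_mem ha hb
    · intro c a _ ha
      beta_reduce
      rw [starW_smul_right, starW_smul_left, ← smul_sub]
      exact Submodule.smul_mem _ c ha
  refine Submodule.span_induction
    (p := fun z _ => starW z y - starW y z ∈ LieN (m + n)) ?_ ?_ ?_ ?_ hx
  · intro z hz
    exact hgen z hz
  · beta_reduce
    rw [starW_zero_left, starW_zero_right, sub_zero]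
    exact Submodule.zero_mem _
  · intro a b _ _ ha hb
    beta_reduce
    rw [starW_add_right, starW_add_left, add_sub_add_comm]
    exact add_mem ha hb
  · intro c a _ ha
    beta_reduce
    rw [starW_smul_right, starW_smul_left, ← smul_sub]
    exact Submodule.smul_mem _ c ha
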